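/- Let k > 0 with k² < 3, let c₀, w₀ ∈ ℝ with c₀ > w₀², and let ξ ∈ (0, 1/2]. Define Ω_{n,ξ} = (n+ξ)((n+ξ)² - 1) k³ (c₀ - w₀²) / (1 + k²(n+ξ)²). Then: (i) Ω_{-2,ξ} < Ω_{0,ξ} < 0 < Ω_{-1,ξ} < Ω_{1,ξ}; (ii) Ω_{n,ξ} < Ω_{n+1,ξ} for all integers n ≥ 1, and Ω_{-(n+1),ξ} < Ω_{-n,ξ} for all integers n ≥ 2; (iii) consequently, the map n ↦ Ω_{n,ξ} is injective on ℤ, i.e. no two eigenvalues iΩ_{m,ξ}, iΩ_{n,ξ} with m ≠ n collide. -/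
import Mathlib


/-- For `k > 0` with `k² < 3`, `c₀ > w₀²`, `ξ ∈ (0, 1/2]` and
`Ω n = (n+ξ)((n+ξ)² - 1) k³ (c₀ - w₀²)/(1 + k²(n+ξ)²)`:
(i) `Ω(-2) < Ω(0) < 0 < Ω(-1) < Ω(1)`;
(ii) `Ω n < Ω (n+1)` for `n ≥ 1` and `Ω (-(n+1)) < Ω (-n)` for `n ≥ 2`;
(iii) `n ↦ Ω n` is injective on `ℤ`, i.e. no two eigenvalues `iΩ_m, iΩ_n`, `m ≠ n`,
collide. -/
theorem stmt16 (k c₀ w₀ ξ : ℝ) (hk : 0 < k) (hk3 : k ^ 2 < 3) (hcw : w₀ ^ 2 < c₀)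
    (hξ : ξ ∈ Set.Ioc (0:ℝ) (1 / 2))
    (Ω : ℤ → ℝ)
    (hΩ : ∀ n : ℤ, Ω n = ((n : ℝ) + ξ) * (((n : ℝ) + ξ) ^ 2 - 1) * k ^ 3 * (c₀ - w₀ ^ 2) /
        (1 + k ^ 2 * ((n : ℝ) + ξ) ^ 2)) :
    (Ω (-2) < Ω 0 ∧ Ω 0 < 0 ∧ 0 < Ω (-1) ∧ Ω (-1) < Ω 1) ∧
    (∀ n : ℤ, 1 ≤ n → Ω n < Ω (n + 1)) ∧
    (∀ n : ℤ, 2 ≤ n → Ω (-(n + 1)) < Ω (-n)) ∧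
    Function.Injective Ω := by
  obtain ⟨hξ0, hξh⟩ := hξ
  have hC : 0 < c₀ - w₀ ^ 2 := by linarith
  have hK : 0 < k ^ 3 * (c₀ - w₀ ^ 2) := by positivity
  have hk2 : 0 < k ^ 2 := by positivity
  have key : ∀ a b : ℝ, a * (a ^ 2 - 1) * (1 + k ^ 2 * b ^ 2) <
      b * (b ^ 2 - 1) * (1 + k ^ 2 * a ^ 2) →
      a * (a ^ 2 - 1) * k ^ 3 * (c₀ - w₀ ^ 2) / (1 + k ^ 2 * a ^ 2) <
      b * (b ^ 2 - 1) * k ^ 3 * (c₀ - w₀ ^ 2) / (1 + k ^ 2 * b ^ 2) := by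
    intro a b h
    rw [div_lt_div_iff₀ (by positivity) (by positivity)]
    nlinarith [mul_lt_mul_of_pos_right h hK]
  -- (i)
  have i1 : Ω (-2) < Ω 0 := by
    rw [hΩ, hΩ]; push_cast
    apply key
    nlinarith [sq_nonneg (ξ - 1), mul_pos hξ0 hξ0, sq_nonneg k,
      mul_nonneg (sq_nonneg (ξ - 1)) (sq_nonneg k)]
  have i2 : Ω 0 < 0 := by
    rw [hΩ]; push_cast
    apply div_neg_of_neg_of_pos _ (by positivity)
    have h1 : ξ * (ξ ^ 2 - 1) < 0 := by nlinarith
    nlinarith [mul_neg_of_neg_of_pos h1 hK]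
  have i3 : 0 < Ω (-1) := by
    rw [hΩ]; push_cast
    apply div_pos _ (by positivity)
    have h1 : 0 < (-1 + ξ) * ((-1 + ξ) ^ 2 - 1) := by nlinarith
    nlinarith [mul_pos h1 hK]
  have i4 : Ω (-1) < Ω 1 := by
    rw [hΩ, hΩ]; push_cast
    apply key
    nlinarith [mul_pos hξ0 hξ0, mul_pos (mul_pos hξ0 hξ0) hk2,
      mul_nonneg (mul_nonneg hξ0.le hξ0.le) (sq_nonneg (k * ξ))]
  -- (ii)
  have step : ∀ n : ℤ, 1 ≤ n → Ω n < Ω (n + 1) := by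
    intro n hn
    rw [hΩ, hΩ]; push_cast
    apply key
    have hx : (1 : ℝ) ≤ (n : ℝ) := by exact_mod_cast hn
    set x := (n : ℝ) + ξ with hxdef
    have hx1 : 1 < x := by simp [hxdef]; linarith
    have h2 : (n : ℝ) + 1 + ξ = x + 1 := by rw [hxdef]; ring
    rw [h2]
    nlinarith [sq_nonneg (k * x), sq_nonneg k, mul_pos (mul_pos hk2 (by linarith : (0:ℝ) < x)) (by linarith : (0:ℝ) < x + 1)]
  have negstep : ∀ n : ℤ, 2 ≤ n → Ω (-(n + 1)) < Ω (-n) := by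
    intro n hn
    rw [hΩ, hΩ]; push_cast
    have hx : (2 : ℝ) ≤ (n : ℝ) := by exact_mod_cast hn
    apply key
    set b := -(n : ℝ) + ξ with hbdef
    have hb : b ≤ -3/2 := by simp [hbdef]; linarith
    have h1 : (-((n:ℝ) + 1) + ξ) = b - 1 := by simp [hbdef]; ring
    rw [h1]
    nlinarith [sq_nonneg (k * b), sq_nonneg k, mul_pos (mul_pos hk2 (by nlinarith : (0:ℝ) < b * (b-1))) (by nlinarith : (0:ℝ) < b * (b-1) + 1)]
  refine ⟨⟨i1, i2, i3, i4⟩, step, negstep, ?_⟩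
  have pos_mono : ∀ m n : ℤ, 1 ≤ m → m < n → Ω m < Ω n := by
    intro m n hm hmn
    obtain ⟨d, rfl⟩ : ∃ d : ℕ, n = m + 1 + d := ⟨(n - m - 1).toNat, by omega⟩
    clear hmn
    induction d with
    | zero => simpa using step m hm
    | succ d ih =>
      have h2 := step (m + 1 + (d : ℤ)) (by omega)
      have heq : m + 1 + ((d + 1 : ℕ) : ℤ) = m + 1 + (d : ℤ) + 1 := by push_cast; ring
      rw [heq]
      exact ih.trans h2
  have neg_mono : ∀ m n : ℤ, m < n → n ≤ -2 → Ω m < Ω n := by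
    intro m n hmn hn
    obtain ⟨d, rfl⟩ : ∃ d : ℕ, m = n - 1 - d := ⟨(n - m - 1).toNat, by omega⟩
    clear hmn
    induction d with
    | zero =>
      have h2 := negstep (-n) (by omega)
      have e1 : -(-n + 1) = n - 1 - ((0 : ℕ) : ℤ) := by push_cast; ring
      have e2 : -(-n) = n := by ring
      rw [e1, e2] at h2
      exact h2
    | succ d ih =>
      have h2 := negstep (-(n - 1 - (d : ℤ))) (by omega)
      have e1 : -(-(n - 1 - (d : ℤ)) + 1) = n - 1 - ((d + 1 : ℕ) : ℤ) := by push_cast; ring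
      have e2 : -(-(n - 1 - (d : ℤ))) = n - 1 - (d : ℤ) := by ring
      rw [e1, e2] at h2
      exact h2.trans ih
  have hneg : ∀ p : ℤ, p ≤ -2 → Ω p < Ω 0 := by
    intro p hp
    rcases eq_or_lt_of_le hp with h | h
    · rw [h]; exact i1
    · exact (neg_mono p (-2) h le_rfl).trans i1
  have hpos1 : ∀ p : ℤ, 1 ≤ p → Ω (-1) < Ω p := by
    intro p hp
    rcases eq_or_lt_of_le hp with h | h
    · rw [← h]; exact i4
    · exact i4.trans (pos_mono 1 p le_rfl h)
  have sgnn : ∀ p : ℤ, p = 0 ∨ p ≤ -2 → Ω p < 0 := by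
    rintro p (rfl | hp)
    · exact i2
    · exact (hneg p hp).trans i2
  have sgnp : ∀ p : ℤ, p = -1 ∨ 1 ≤ p → 0 < Ω p := by
    rintro p (rfl | hp)
    · exact i3
    · exact i3.trans (hpos1 p hp)
  intro m n h
  by_contra hne
  wlog hmn : m < n generalizing m n
  · exact this h.symm (Ne.symm hne) (by omega)
  rcases (by omega : n ≤ -2 ∨ n = -1 ∨ n = 0 ∨ 1 ≤ n) with hn | hn | hn | hn
  · exact absurd h (ne_of_lt (neg_mono m n hmn hn))
  · subst hn
    have h1 := sgnn m (by omega)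
    rw [h] at h1
    linarith
  · subst hn
    rcases (by omega : m = -1 ∨ m ≤ -2) with hm | hm
    · subst hm; linarith
    · exact absurd h (ne_of_lt (hneg m hm))
  · rcases (by omega : 1 ≤ m ∨ m = 0 ∨ m = -1 ∨ m ≤ -2) with hm | hm | hm | hm
    · exact absurd h (ne_of_lt (pos_mono m n hm hmn))
    · subst hm
      have h2 := sgnp n (Or.inr hn)
      rw [← h] at h2
      linarith
    · subst hm; exact absurd h (ne_of_lt (hpos1 n hn))
    · have h1 := sgnn m (Or.inr hm)
      have h2 := sgnp n (Or.inr hn)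
      rw [h] at h1
      linarith
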